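/- Let (Λ, π, γ) be a quantified scenario such that some f ∈ F is minimal in F ∪ A with respect to ≺_Q (i.e. f ∈ Q_a for all a ∈ A), and let Λ^{f/0}, Λ^{f/1} be the reduced quantified scenarios obtained by substituting 0 (resp. 1) for the f-variable of φ and removing f. Then the probability–maximal-cost Pareto front satisfies the recursion PMC(Λ̂) = PF(Ψ_F(PMC(Λ̂^{f/0}), PMC(Λ̂^{f/1}), π_f)), where Ψ_F(I₁,I₂,p) = {((1−p)·p₁ + p·p₂, max(c₁,c₂)) : (p₁,c₁) ∈ I₁, (p₂,c₂) ∈ I₂}. -/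

import Mathlib

open scoped ENNReal

/-- A scenario `(F, A, φ, Q)`: `φ : 𝔹^F × 𝔹^A → 𝔹` is a Boolean function, and
`Q` assigns to each attack `a ∈ A` the subset `Q_a ⊆ F` of failures observable when
deciding about `a`; the family `{Q_a}` is totally ordered by inclusion. -/
structure Scenario (F A : Type) where
  φ : (F → Bool) → (A → Bool) → Bool
  Q : A → Finset F
  chain : ∀ a a' : A, Q a ⊆ Q a' ∨ Q a' ⊆ Q a

variable {F A : Type}

/-- A strategy: for each `a ∈ A`, a map `σ_a : 𝔹^{Q_a} → 𝔹`. -/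
def Strategy (Λ : Scenario F A) : Type :=
  (a : A) → ({f : F // f ∈ Λ.Q a} → Bool) → Bool

/-- The induced map `σ̂ : 𝔹^F → 𝔹^A`, `σ̂(x)_a = σ_a(x|_{Q_a})`. -/
def hatS (Λ : Scenario F A) (σ : Strategy Λ) (x : F → Bool) : A → Bool :=
  fun a => σ a fun f => x f.1

/-- The reduced scenario `Λ^{f/b}`: substitute `b` for the `f`-variable of `φ`,
remove `f` from `F`, and set `Q'_a = Q_a \ {f}`. -/
def Scenario.reduceF [DecidableEq F] (Λ : Scenario F A) (f : F) (b : Bool) :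
    Scenario {g : F // g ≠ f} A where
  φ := fun x y => Λ.φ (fun g => if h : g = f then b else x ⟨g, h⟩) y
  Q := fun a => (Λ.Q a).subtype (· ≠ f)
  chain := fun a a' => (Λ.chain a a').imp
    (fun h x hx => Finset.mem_subtype.mpr (h (Finset.mem_subtype.mp hx)))
    (fun h x hx => Finset.mem_subtype.mpr (h (Finset.mem_subtype.mp hx)))

/-- Restriction of `x ∈ 𝔹^{Q_a}` to `𝔹^{Q_a \ {f}}` (the `x'` of the paper). -/
def restr [DecidableEq F] (Λ : Scenario F A) (f : F) (b : Bool) (a : A)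
    (x : {f' : F // f' ∈ Λ.Q a} → Bool) :
    ({g // g ∈ (Λ.reduceF f b).Q a} → Bool) :=
  fun g => x ⟨g.1.1, Finset.mem_subtype.mp g.2⟩

/-- The composed strategy `σ⁰ ⋆ σ¹`, defined by
`(σ⁰ ⋆ σ¹)_a(x) = (¬x_f ∧ σ⁰_a(x')) ∨ (x_f ∧ σ¹_a(x'))`. -/
def star [DecidableEq F] (Λ : Scenario F A) (f : F) (hf : ∀ a, f ∈ Λ.Q a)
    (σ0 : Strategy (Λ.reduceF f false)) (σ1 : Strategy (Λ.reduceF f true)) :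
    Strategy Λ := fun a x =>
  (!(x ⟨f, hf a⟩) && σ0 a (restr Λ f false a x)) ||
    ((x ⟨f, hf a⟩) && σ1 a (restr Λ f true a x))

/-- Bernoulli weight of an outcome `x ∈ 𝔹^F`:
`(∏_{f : x_f = 1} π_f) · (∏_{f : x_f = 0} (1 - π_f))`. -/
noncomputable def wght [Fintype F] (π : F → ℝ≥0∞) (x : F → Bool) : ℝ≥0∞ :=
  ∏ f, if x f then π f else 1 - π f

/-- Success probability `π̂(σ)`: the probability that `φ(x, σ̂(x)) = 1` when the
coordinates `x_f` are independent Bernoulli(`π_f`). -/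
noncomputable def probS [Fintype F] [DecidableEq F] (Λ : Scenario F A)
    (π : F → ℝ≥0∞) (σ : Strategy Λ) : ℝ≥0∞ :=
  ∑ x : F → Bool, wght π x * (if Λ.φ x (hatS Λ σ x) then 1 else 0)

/-- Cost incurred by strategy `σ` upon observing `x`: `Σ_{a : σ̂(x)_a = 1} γ_a`. -/
noncomputable def costOf [Fintype A] (Λ : Scenario F A) (γ : A → ℝ≥0∞) (σ : Strategy Λ)
    (x : F → Bool) : ℝ≥0∞ :=
  ∑ a, if hatS Λ σ x a then γ a else 0

/-- Maximal cost `γ̂_m(σ) = max_{x ∈ 𝔹^F} Σ_{a : σ̂(x)_a = 1} γ_a`. -/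
noncomputable def maxCost [Fintype F] [DecidableEq F] [Fintype A] (Λ : Scenario F A)
    (γ : A → ℝ≥0∞) (σ : Strategy Λ) : ℝ≥0∞ :=
  ⨆ x : F → Bool, costOf Λ γ σ x

/-- Expected cost `γ̂_e(σ)`. -/
noncomputable def expCost [Fintype F] [DecidableEq F] [Fintype A] (Λ : Scenario F A)
    (π : F → ℝ≥0∞) (γ : A → ℝ≥0∞) (σ : Strategy Λ) : ℝ≥0∞ :=
  ∑ x : F → Bool, wght π x * costOf Λ γ σ x

/-- `D = [0,1] × [0,∞]`: probability–cost pairs, costs in the extended nonnegative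
reals.  We encode it as the pairs `(p, c) : ℝ≥0∞ × ℝ≥0∞` with `p ≤ 1`. -/
def Dom : Set (ℝ≥0∞ × ℝ≥0∞) := {d | d.1 ≤ 1}

/-- `(p,c) ⊑ (p',c')` iff `p ≥ p'` and `c ≤ c'`. -/
def sqle (d d' : ℝ≥0∞ × ℝ≥0∞) : Prop := d'.1 ≤ d.1 ∧ d.2 ≤ d'.2

/-- `d ⊏ d'` iff `d ⊑ d'` and `d ≠ d'`. -/
def slt (d d' : ℝ≥0∞ × ℝ≥0∞) : Prop := sqle d d' ∧ d ≠ d'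

/-- The Pareto front `PF(I) = {d ∈ I : ∀ d' ∈ I, ¬(d' ⊏ d)}`. -/
def PF (I : Set (ℝ≥0∞ × ℝ≥0∞)) : Set (ℝ≥0∞ × ℝ≥0∞) :=
  {d ∈ I | ∀ d' ∈ I, ¬ slt d' d}

/-- `ψ((p₁,c₁),(p₂,c₂),p) = ((1−p)·p₁ + p·p₂, max(c₁,c₂))`. -/
noncomputable def psi (d₁ d₂ : ℝ≥0∞ × ℝ≥0∞) (p : ℝ≥0∞) : ℝ≥0∞ × ℝ≥0∞ :=
  ((1 - p) * d₁.1 + p * d₂.1, max d₁.2 d₂.2)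

/-- `Ψ_F(I₁,I₂,p) = {ψ(d₁,d₂,p) : d₁ ∈ I₁, d₂ ∈ I₂}`. -/
noncomputable def PsiF (I₁ I₂ : Set (ℝ≥0∞ × ℝ≥0∞)) (p : ℝ≥0∞) : Set (ℝ≥0∞ × ℝ≥0∞) :=
  {d | ∃ d₁ ∈ I₁, ∃ d₂ ∈ I₂, d = psi d₁ d₂ p}


section Aux

variable {F A : Type}

/-- Extend `x : 𝔹^{F∖{f}}` by value `b` at `f`. -/
def extF [DecidableEq F] (f : F) (x : {g : F // g ≠ f} → Bool) (b : Bool) : F → Bool :=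
  fun g => if h : g = f then b else x ⟨g, h⟩

lemma extF_self [DecidableEq F] (f : F) (x : {g : F // g ≠ f} → Bool) (b : Bool) :
    extF f x b f = b := dif_pos rfl

lemma extF_comp [DecidableEq F] (f : F) (x : {g : F // g ≠ f} → Bool) (b : Bool) :
    (fun g : {g : F // g ≠ f} => extF f x b g.1) = x := by
  funext g
  simp only [extF, dif_neg g.2]

lemma extF_eta [DecidableEq F] (f : F) (x : F → Bool) :
    extF f (fun g => x g.1) (x f) = x := by
  funext g
  by_cases h : g = f
  · subst h; exact extF_self ..
  · simp only [extF, dif_neg h]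

lemma funSplitAt_symm_extF [DecidableEq F] (f : F) (p : Bool × ({g : F // g ≠ f} → Bool)) :
    (Equiv.funSplitAt f Bool).symm p = extF f p.2 p.1 := by
  funext g
  by_cases h : g = f
  · subst h
    simp [Equiv.funSplitAt, Equiv.piSplitAt, extF]
  · simp [Equiv.funSplitAt, Equiv.piSplitAt, extF, h]

lemma hatS_star [DecidableEq F] (Λ : Scenario F A) (f : F) (hf : ∀ a, f ∈ Λ.Q a)
    (σ0 : Strategy (Λ.reduceF f false)) (σ1 : Strategy (Λ.reduceF f true))
    (x : F → Bool) (a : A) :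
    hatS Λ (star Λ f hf σ0 σ1) x a =
      if x f then hatS (Λ.reduceF f true) σ1 (fun g => x g.1) a
      else hatS (Λ.reduceF f false) σ0 (fun g => x g.1) a := by
  have key : hatS Λ (star Λ f hf σ0 σ1) x a =
      (((!(x f)) && hatS (Λ.reduceF f false) σ0 (fun g => x g.1) a) ||
        ((x f) && hatS (Λ.reduceF f true) σ1 (fun g => x g.1) a)) := rfl
  rw [key]
  cases h : x f
  · simp
  · simp

/-- Splitting a strategy of `Λ` into strategies for the reduced scenarios. -/
def splitS [DecidableEq F] (Λ : Scenario F A) (f : F) (σ : Strategy Λ) (b : Bool) :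
    Strategy (Λ.reduceF f b) := fun a x =>
  σ a (fun g => if h : g.1 = f then b else x ⟨⟨g.1, h⟩, Finset.mem_subtype.mpr g.2⟩)

lemma star_split [DecidableEq F] (Λ : Scenario F A) (f : F) (hf : ∀ a, f ∈ Λ.Q a)
    (σ : Strategy Λ) :
    star Λ f hf (splitS Λ f σ false) (splitS Λ f σ true) = σ := by
  funext a x
  have key : ∀ b : Bool, x ⟨f, hf a⟩ = b →
      σ a (fun g => if h : g.1 = f then b
        else (restr Λ f b a x) ⟨⟨g.1, h⟩, Finset.mem_subtype.mpr g.2⟩) = σ a x := by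
    intro b hb
    congr 1
    funext g
    by_cases h : g.1 = f
    · rw [dif_pos h, ← hb]
      congr 1
      exact Subtype.ext h.symm
    · rw [dif_neg h]
      rfl
  unfold _root_.star splitS
  cases hb : x ⟨f, hf a⟩
  · simpa [hb] using key false hb
  · simpa [hb] using key true hb

lemma wght_extF [Fintype F] [DecidableEq F] (π : F → ℝ≥0∞) (f : F)
    (x : {g : F // g ≠ f} → Bool) (b : Bool) :
    wght π (extF f x b) = (if b then π f else 1 - π f) * wght (fun g => π g.1) x := by
  unfold wght
  rw [Fintype.prod_eq_mul_prod_compl f]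
  congr 1
  · rw [extF_self]
  · rw [Finset.prod_subtype ({f}ᶜ : Finset F) (p := fun g => g ≠ f)
      (fun g => by simp) (fun g => if extF f x b g then π g else 1 - π g)]
    apply Finset.prod_congr rfl
    intro g _
    have hg : extF f x b g.1 = x g := congrFun (extF_comp f x b) g
    rw [hg]

lemma hatS_star_extF_false [DecidableEq F] (Λ : Scenario F A) (f : F)
    (hf : ∀ a, f ∈ Λ.Q a) (σ0 : Strategy (Λ.reduceF f false))
    (σ1 : Strategy (Λ.reduceF f true)) (x : {g : F // g ≠ f} → Bool) :
    hatS Λ (star Λ f hf σ0 σ1) (extF f x false) = hatS (Λ.reduceF f false) σ0 x := by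
  funext a
  rw [hatS_star, extF_self, if_neg (by simp), extF_comp]

lemma hatS_star_extF_true [DecidableEq F] (Λ : Scenario F A) (f : F)
    (hf : ∀ a, f ∈ Λ.Q a) (σ0 : Strategy (Λ.reduceF f false))
    (σ1 : Strategy (Λ.reduceF f true)) (x : {g : F // g ≠ f} → Bool) :
    hatS Λ (star Λ f hf σ0 σ1) (extF f x true) = hatS (Λ.reduceF f true) σ1 x := by
  funext a
  rw [hatS_star, extF_self, if_pos rfl, extF_comp]

lemma probS_star [Fintype F] [DecidableEq F] (Λ : Scenario F A) (π : F → ℝ≥0∞)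
    (f : F) (hf : ∀ a, f ∈ Λ.Q a)
    (σ0 : Strategy (Λ.reduceF f false)) (σ1 : Strategy (Λ.reduceF f true)) :
    probS Λ π (star Λ f hf σ0 σ1) =
      (1 - π f) * probS (Λ.reduceF f false) (fun g => π g.1) σ0
        + π f * probS (Λ.reduceF f true) (fun g => π g.1) σ1 := by
  unfold probS
  rw [← Equiv.sum_comp (Equiv.funSplitAt f Bool).symm
    (fun x => wght π x * (if Λ.φ x (hatS Λ (star Λ f hf σ0 σ1) x) then 1 else 0))]
  simp only [funSplitAt_symm_extF]
  rw [Fintype.sum_prod_type, Fintype.sum_bool]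
  rw [add_comm, Finset.mul_sum, Finset.mul_sum]
  congr 1
  · refine Finset.sum_congr rfl fun x _ => ?_
    rw [wght_extF, hatS_star_extF_false, mul_assoc]
    rfl
  · refine Finset.sum_congr rfl fun x _ => ?_
    rw [wght_extF, hatS_star_extF_true, mul_assoc]
    rfl

lemma costOf_star [Fintype A] [DecidableEq F] (Λ : Scenario F A) (γ : A → ℝ≥0∞)
    (f : F) (hf : ∀ a, f ∈ Λ.Q a)
    (σ0 : Strategy (Λ.reduceF f false)) (σ1 : Strategy (Λ.reduceF f true))
    (x : F → Bool) :
    costOf Λ γ (star Λ f hf σ0 σ1) x =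
      if x f then costOf (Λ.reduceF f true) γ σ1 (fun g => x g.1)
      else costOf (Λ.reduceF f false) γ σ0 (fun g => x g.1) := by
  unfold costOf
  by_cases h : x f
  · rw [if_pos h]
    exact Finset.sum_congr rfl fun a _ => by rw [hatS_star, if_pos h]
  · rw [if_neg h]
    exact Finset.sum_congr rfl fun a _ => by rw [hatS_star, if_neg h]

lemma maxCost_star [Fintype F] [Fintype A] [DecidableEq F] (Λ : Scenario F A)
    (γ : A → ℝ≥0∞) (f : F) (hf : ∀ a, f ∈ Λ.Q a)
    (σ0 : Strategy (Λ.reduceF f false)) (σ1 : Strategy (Λ.reduceF f true)) :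
    maxCost Λ γ (star Λ f hf σ0 σ1) =
      max (maxCost (Λ.reduceF f false) γ σ0) (maxCost (Λ.reduceF f true) γ σ1) := by
  unfold maxCost
  apply le_antisymm
  · refine iSup_le fun x => ?_
    rw [costOf_star Λ γ f hf σ0 σ1 x]
    by_cases h : x f
    · rw [if_pos h]
      exact le_max_of_le_right (le_iSup _ _)
    · rw [if_neg h]
      exact le_max_of_le_left (le_iSup _ _)
  · refine max_le (iSup_le fun x => ?_) (iSup_le fun x => ?_)
    · have h := costOf_star Λ γ f hf σ0 σ1 (extF f x false)
      rw [extF_self, if_neg (by simp), extF_comp] at h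
      rw [← h]
      exact le_iSup _ _
    · have h := costOf_star Λ γ f hf σ0 σ1 (extF f x true)
      rw [extF_self, if_pos rfl, extF_comp] at h
      rw [← h]
      exact le_iSup _ _

instance strategyFinite [Finite F] [Finite A] (Λ : Scenario F A) :
    Finite (Strategy Λ) := by
  unfold Strategy
  infer_instance

/-! ### Order lemmas -/

def toOrd (d : ℝ≥0∞ × ℝ≥0∞) : ℝ≥0∞ᵒᵈ × ℝ≥0∞ := (OrderDual.toDual d.1, d.2)

lemma sqle_iff {d d' : ℝ≥0∞ × ℝ≥0∞} : sqle d d' ↔ toOrd d ≤ toOrd d' := Iff.rfl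

lemma toOrd_inj {d d' : ℝ≥0∞ × ℝ≥0∞} (h : toOrd d = toOrd d') : d = d' := by
  unfold toOrd at h
  exact Prod.ext (congrArg Prod.fst h) (congrArg Prod.snd h)

lemma sqle_refl (d : ℝ≥0∞ × ℝ≥0∞) : sqle d d := ⟨le_rfl, le_rfl⟩

lemma sqle_trans {d e c : ℝ≥0∞ × ℝ≥0∞} (h : sqle d e) (h' : sqle e c) : sqle d c :=
  ⟨h'.1.trans h.1, h.2.trans h'.2⟩

lemma sqle_antisymm {d e : ℝ≥0∞ × ℝ≥0∞} (h : sqle d e) (h' : sqle e d) : d = e :=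
  toOrd_inj (le_antisymm (sqle_iff.mp h) (sqle_iff.mp h'))

lemma exists_PF_le {I : Set (ℝ≥0∞ × ℝ≥0∞)} (hI : I.Finite) {d : ℝ≥0∞ × ℝ≥0∞}
    (hd : d ∈ I) : ∃ e ∈ PF I, sqle e d := by
  obtain ⟨m, ⟨hmI, hmd⟩, hmin⟩ := Set.Finite.exists_minimalFor toOrd {e ∈ I | sqle e d}
    (hI.subset (Set.sep_subset _ _)) ⟨d, hd, sqle_refl d⟩
  refine ⟨m, ⟨hmI, fun e he hlt => hlt.2 ?_⟩, hmd⟩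
  exact (toOrd_inj (le_antisymm (hmin ⟨he, sqle_trans hlt.1 hmd⟩ (sqle_iff.mp hlt.1)) (sqle_iff.mp hlt.1))).symm

lemma psi_mono {d₁ d₂ e₁ e₂ : ℝ≥0∞ × ℝ≥0∞} (h₁ : sqle e₁ d₁) (h₂ : sqle e₂ d₂)
    (p : ℝ≥0∞) : sqle (psi e₁ e₂ p) (psi d₁ d₂ p) :=
  ⟨add_le_add (mul_le_mul_right h₁.1 _) (mul_le_mul_right h₂.1 _),
    max_le_max h₁.2 h₂.2⟩

lemma PF_PsiF_PF {I₁ I₂ : Set (ℝ≥0∞ × ℝ≥0∞)} (h₁ : I₁.Finite) (h₂ : I₂.Finite)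
    (p : ℝ≥0∞) : PF (PsiF I₁ I₂ p) = PF (PsiF (PF I₁) (PF I₂) p) := by
  have hsub : PsiF (PF I₁) (PF I₂) p ⊆ PsiF I₁ I₂ p := by
    rintro d ⟨d₁, hd₁, d₂, hd₂, rfl⟩
    exact ⟨d₁, hd₁.1, d₂, hd₂.1, rfl⟩
  ext d
  constructor
  · rintro ⟨⟨d₁, hd₁, d₂, hd₂, rfl⟩, hund⟩
    obtain ⟨e₁, he₁, hle₁⟩ := exists_PF_le h₁ hd₁
    obtain ⟨e₂, he₂, hle₂⟩ := exists_PF_le h₂ hd₂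
    have hle := psi_mono hle₁ hle₂ p
    have heq : psi e₁ e₂ p = psi d₁ d₂ p := by
      by_contra hne
      exact hund _ ⟨e₁, he₁.1, e₂, he₂.1, rfl⟩ ⟨hle, hne⟩
    exact ⟨⟨e₁, he₁, e₂, he₂, heq.symm⟩, fun d' hd' => hund d' (hsub hd')⟩
  · rintro ⟨⟨d₁, hd₁, d₂, hd₂, rfl⟩, hund⟩
    refine ⟨⟨d₁, hd₁.1, d₂, hd₂.1, rfl⟩, ?_⟩
    rintro d' ⟨e₁, he₁, e₂, he₂, rfl⟩ hlt
    obtain ⟨f₁, hf₁, hle₁⟩ := exists_PF_le h₁ he₁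
    obtain ⟨f₂, hf₂, hle₂⟩ := exists_PF_le h₂ he₂
    have h1 : sqle (psi f₁ f₂ p) (psi e₁ e₂ p) := psi_mono hle₁ hle₂ p
    rcases eq_or_ne (psi f₁ f₂ p) (psi d₁ d₂ p) with heq | hne
    · exact hlt.2 (sqle_antisymm hlt.1 (heq ▸ h1))
    · exact hund _ ⟨f₁, hf₁, f₂, hf₂, rfl⟩ ⟨sqle_trans h1 hlt.1, hne⟩

end Aux


/-- The recursion `PMC(Λ̂) = PF(Ψ_F(PMC(Λ̂^{f/0}), PMC(Λ̂^{f/1}), π_f))`, where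
`PMC(Λ̂) = PF(τ_m(Σ_Λ))`. -/
theorem PMC_recursion_f [Fintype F] [Fintype A] [DecidableEq F]
    (Λ : Scenario F A) (π : F → ℝ≥0∞) (hπ : ∀ g, π g ≤ 1) (γ : A → ℝ≥0∞)
    (f : F) (hf : ∀ a, f ∈ Λ.Q a) :
    PF (Set.range (fun σ : Strategy Λ => (probS Λ π σ, maxCost Λ γ σ))) =
      PF (PsiF
        (PF (Set.range (fun σ0 : Strategy (Λ.reduceF f false) =>
          (probS (Λ.reduceF f false) (fun g => π g.1) σ0,
            maxCost (Λ.reduceF f false) γ σ0))))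
        (PF (Set.range (fun σ1 : Strategy (Λ.reduceF f true) =>
          (probS (Λ.reduceF f true) (fun g => π g.1) σ1,
            maxCost (Λ.reduceF f true) γ σ1))))
        (π f)) := by
  classical
  have tau : ∀ (σ0 : Strategy (Λ.reduceF f false)) (σ1 : Strategy (Λ.reduceF f true)),
      (probS Λ π (star Λ f hf σ0 σ1), maxCost Λ γ (star Λ f hf σ0 σ1)) =
        psi (probS (Λ.reduceF f false) (fun g => π g.1) σ0,
              maxCost (Λ.reduceF f false) γ σ0)
            (probS (Λ.reduceF f true) (fun g => π g.1) σ1,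
              maxCost (Λ.reduceF f true) γ σ1) (π f) := by
    intro σ0 σ1
    rw [probS_star, maxCost_star]
    rfl
  have hrange : Set.range (fun σ : Strategy Λ => (probS Λ π σ, maxCost Λ γ σ)) =
      PsiF
        (Set.range (fun σ0 : Strategy (Λ.reduceF f false) =>
          (probS (Λ.reduceF f false) (fun g => π g.1) σ0,
            maxCost (Λ.reduceF f false) γ σ0)))
        (Set.range (fun σ1 : Strategy (Λ.reduceF f true) =>
          (probS (Λ.reduceF f true) (fun g => π g.1) σ1,
            maxCost (Λ.reduceF f true) γ σ1)))
        (π f) := by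
    ext d
    constructor
    · rintro ⟨σ, rfl⟩
      have h := tau (splitS Λ f σ false) (splitS Λ f σ true)
      rw [star_split Λ f hf σ] at h
      exact ⟨_, ⟨splitS Λ f σ false, rfl⟩, _, ⟨splitS Λ f σ true, rfl⟩, h⟩
    · rintro ⟨d₁, ⟨σ0, rfl⟩, d₂, ⟨σ1, rfl⟩, rfl⟩
      exact ⟨star Λ f hf σ0 σ1, tau σ0 σ1⟩
  rw [hrange]
  exact PF_PsiF_PF (Set.finite_range _) (Set.finite_range _) (π f)
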